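/- Let q be a real number with 0 < q < 1, define S(k) := q^k(1−q) for k ∈ ℕ, and for integers n ≥ 1 define a^{(n)}(k) := (S(k)·S(k+n))^{−1/2} and b^{(n)}(k) := a^{(n−1)}(k)·√(1−q^{k+n}). Then: (i) ∑_{k=0}^∞ 1/a^{(n)}(k) = q^{n/2}; and (ii) ∑_{k=0}^∞ a^{(n)}(k)/b^{(n)}(k)² = (1−q)·q^{n/2−1}·∑_{k=0}^∞ q^k/(1−q^{k+n}) ≤ q^{(n−2)/2}/(1−q). In particular ∑_k 1/a^{(n)}(k) → 0 as n → ∞ and ∑_k a^{(n)}(k)/b^{(n)}(k)² is bounded in n. -/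

import Mathlib

open Filter

theorem q_weights_s_and_t (q : ℝ) (hq0 : 0 < q) (hq1 : q < 1)
    (S : ℕ → ℝ) (hS : ∀ k, S k = q^k * (1 - q))
    (a : ℕ → ℕ → ℝ) (ha : ∀ m k, a m k = (Real.sqrt (S k * S (k+m)))⁻¹)
    (b : ℕ → ℕ → ℝ)
    (hb : ∀ m k, 1 ≤ m → b m k = a (m-1) k * Real.sqrt (1 - q^(k+m))) :
    (∀ n : ℕ, 1 ≤ n → ∑' k, 1 / a n k = q ^ ((n : ℝ) / 2)) ∧
    (∀ n : ℕ, 1 ≤ n →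
      ∑' k, a n k / (b n k)^2 =
        (1 - q) * q ^ ((n : ℝ) / 2 - 1) * ∑' k : ℕ, q^k / (1 - q^(k+n)) ∧
      ∑' k, a n k / (b n k)^2 ≤ q ^ (((n : ℝ) - 2) / 2) / (1 - q)) ∧
    Tendsto (fun n : ℕ => ∑' k, 1 / a n k) atTop (nhds 0) ∧
    (∃ C : ℝ, ∀ n : ℕ, 1 ≤ n → ∑' k, a n k / (b n k)^2 ≤ C) := by
  have h1q : (0:ℝ) < 1 - q := by linarith
  -- square root computation
  have hsq : ∀ m k : ℕ, Real.sqrt (S k * S (k+m)) = (1-q) * q^k * q^((m:ℝ)/2) := by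
    intro m k
    have hr : (q^((m:ℝ)/2))^2 = q^m := by
      rw [sq, ← Real.rpow_add hq0]
      have : (m:ℝ)/2 + (m:ℝ)/2 = (m:ℝ) := by ring
      rw [this, Real.rpow_natCast]
    have : S k * S (k+m) = ((1-q) * q^k * q^((m:ℝ)/2))^2 := by
      rw [hS, hS, pow_add, mul_pow, mul_pow, hr]
      ring
    rw [this, Real.sqrt_sq (by positivity)]
  have hterm1 : ∀ n k : ℕ, 1 / a n k = ((1-q) * q^((n:ℝ)/2)) * q^k := by
    intro n k
    rw [one_div, ha, inv_inv, hsq]; ring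
  have hs : ∀ n : ℕ, ∑' k, 1 / a n k = q ^ ((n : ℝ) / 2) := by
    intro n
    calc ∑' k, 1 / a n k = ∑' k : ℕ, ((1-q) * q^((n:ℝ)/2)) * q^k :=
          tsum_congr (hterm1 n)
      _ = ((1-q) * q^((n:ℝ)/2)) * (1-q)⁻¹ := by
          rw [tsum_mul_left, tsum_geometric_of_lt_one hq0.le hq1]
      _ = q ^ ((n : ℝ) / 2) := by field_simp
  -- term identity for t
  have htermt : ∀ n k : ℕ, 1 ≤ n →
      a n k / (b n k)^2 = ((1-q) * q^((n:ℝ)/2 - 1)) * (q^k / (1 - q^(k+n))) := by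
    intro n k hn
    have hkn : (0:ℝ) < 1 - q^(k+n) := by
      have : q^(k+n) < 1 := pow_lt_one₀ hq0.le hq1 (by omega)
      linarith
    have hcast : ((n - 1 : ℕ) : ℝ) = (n:ℝ) - 1 := by
      rw [Nat.cast_sub hn]; norm_num
    have hb' : b n k = ((1-q) * q^k * q^(((n:ℝ)-1)/2))⁻¹ * Real.sqrt (1 - q^(k+n)) := by
      rw [hb n k hn, ha, hsq, hcast]
    have hbsq : (b n k)^2 = (((1-q) * q^k * q^(((n:ℝ)-1)/2))^2)⁻¹ * (1 - q^(k+n)) := by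
      rw [hb', mul_pow, Real.sq_sqrt hkn.le, inv_pow]
    rw [ha, hsq, hbsq]
    rw [div_eq_iff (by positivity)]
    field_simp
    have e1 : (q ^ (((n:ℝ)-1)/2))^2 = q ^ ((n:ℝ)-1) := by
      rw [← Real.rpow_natCast (q ^ (((n:ℝ)-1)/2)) 2, ← Real.rpow_mul hq0.le]
      norm_num
    rw [e1, ← Real.rpow_add hq0]
    congr 1
    ring
  -- summability of the comparison series
  have hsumf : ∀ n : ℕ, 1 ≤ n → Summable (fun k : ℕ => q^k / (1 - q^(k+n))) := by
    intro n hn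
    apply Summable.of_nonneg_of_le (g := fun k : ℕ => q^k / (1 - q^(k+n)))
        (f := fun k : ℕ => q^k / (1 - q))
    · intro k
      have h : q^(k+n) < 1 := pow_lt_one₀ hq0.le hq1 (by omega)
      exact div_nonneg (by positivity) (by linarith)
    · intro k
      apply div_le_div_of_nonneg_left (by positivity) h1q
      have : q^(k+n) ≤ q := by
        calc q^(k+n) ≤ q^1 := pow_le_pow_of_le_one hq0.le hq1.le (by omega)
          _ = q := pow_one q
      linarith
    · exact (summable_geometric_of_lt_one hq0.le hq1).div_const _
  have hfle : ∀ n : ℕ, 1 ≤ n →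
      ∑' k : ℕ, q^k / (1 - q^(k+n)) ≤ (1-q)⁻¹ * (1-q)⁻¹ := by
    intro n hn
    calc ∑' k : ℕ, q^k / (1 - q^(k+n)) ≤ ∑' k : ℕ, q^k / (1 - q) := by
          apply Summable.tsum_le_tsum _ (hsumf n hn)
            ((summable_geometric_of_lt_one hq0.le hq1).div_const _)
          intro k
          apply div_le_div_of_nonneg_left (by positivity) h1q
          have : q^(k+n) ≤ q := by
            calc q^(k+n) ≤ q^1 := pow_le_pow_of_le_one hq0.le hq1.le (by omega)
              _ = q := pow_one q
          linarith
      _ = (1-q)⁻¹ * (1-q)⁻¹ := by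
          rw [tsum_div_const, tsum_geometric_of_lt_one hq0.le hq1, div_eq_mul_inv, mul_comm]
  have ht : ∀ n : ℕ, 1 ≤ n → ∑' k, a n k / (b n k)^2 =
      (1 - q) * q ^ ((n : ℝ) / 2 - 1) * ∑' k : ℕ, q^k / (1 - q^(k+n)) := by
    intro n hn
    calc ∑' k, a n k / (b n k)^2
        = ∑' k : ℕ, ((1-q) * q^((n:ℝ)/2 - 1)) * (q^k / (1 - q^(k+n))) :=
          tsum_congr (fun k => htermt n k hn)
      _ = (1 - q) * q ^ ((n : ℝ) / 2 - 1) * ∑' k : ℕ, q^k / (1 - q^(k+n)) := by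
          rw [tsum_mul_left]
  have htle : ∀ n : ℕ, 1 ≤ n →
      ∑' k, a n k / (b n k)^2 ≤ q ^ (((n : ℝ) - 2) / 2) / (1 - q) := by
    intro n hn
    rw [ht n hn]
    have hc : (0:ℝ) ≤ (1 - q) * q ^ ((n : ℝ) / 2 - 1) := by positivity
    calc (1 - q) * q ^ ((n : ℝ) / 2 - 1) * ∑' k : ℕ, q^k / (1 - q^(k+n))
        ≤ (1 - q) * q ^ ((n : ℝ) / 2 - 1) * ((1-q)⁻¹ * (1-q)⁻¹) :=
          mul_le_mul_of_nonneg_left (hfle n hn) hc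
      _ = q ^ (((n : ℝ) - 2) / 2) / (1 - q) := by
          rw [show ((n : ℝ) - 2) / 2 = (n:ℝ)/2 - 1 from by ring]
          rw [show (1-q) * q^((n:ℝ)/2-1) * ((1-q)⁻¹*(1-q)⁻¹)
              = ((1-q)*(1-q)⁻¹) * (q^((n:ℝ)/2-1) * (1-q)⁻¹) from by ring]
          rw [mul_inv_cancel₀ h1q.ne', one_mul]
          exact (div_eq_mul_inv _ _).symm
  refine ⟨fun n _ => hs n, fun n hn => ⟨ht n hn, htle n hn⟩, ?_, ?_⟩
  · have heq : (fun n : ℕ => ∑' k, 1 / a n k) = fun n : ℕ => (q ^ ((1:ℝ)/2))^n := by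
      funext n
      rw [hs n, ← Real.rpow_natCast (q ^ ((1:ℝ)/2)) n, ← Real.rpow_mul hq0.le]
      ring_nf
    rw [heq]
    exact tendsto_pow_atTop_nhds_zero_of_lt_one (by positivity)
      (Real.rpow_lt_one hq0.le hq1 (by norm_num))
  · refine ⟨q ^ (-(1:ℝ)/2) / (1 - q), fun n hn => ?_⟩
    refine (htle n hn).trans ?_
    refine (div_le_div_iff_of_pos_right h1q).mpr ?_
    apply Real.rpow_le_rpow_of_exponent_ge hq0 hq1.le
    have : (1:ℝ) ≤ (n:ℝ) := by exact_mod_cast hn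
    linarith
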